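/- arXiv:2110.09611 — 2 statements merged into one kernel-verified Lean document; each statement's English description precedes it below -/
import Mathlib

section
/- For an orthonormal set {u, v} in ℝ^8, the linear map J_{u∧v} : ℝ^8 → ℝ^8 defined by J_{u∧v}(w) = X(u,v,w) is skew-symmetric, vanishes on span{u,v}, preserves the orthogonal complement (u∧v)^⊥, and satisfies J_{u∧v}² = -id on (u∧v)^⊥; in particular tr(J_{u∧v}^t J_{u∧v}) = 6. -/
open scoped RealInnerProductSpace

noncomputable section

abbrev Oct : Type := EuclideanSpace ℝ (Fin 8)

def octe (i : Fin 8) : Oct := EuclideanSpace.single i 1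

def plusTriples : List (Fin 8 × Fin 8 × Fin 8) :=
  [(1,2,3),(1,4,5),(1,7,6),(2,4,6),(2,5,7),(3,4,7),(3,6,5)]

/-- Completely skew-symmetric structure tensor taking the value `+1` on the
triples 123, 145, 176, 246, 257, 347, 365. -/
def eps (i j k : Fin 8) : ℝ :=
  if plusTriples.any (fun t => decide ((i,j,k) = t ∨ (i,j,k) = (t.2.1, t.2.2, t.1) ∨
      (i,j,k) = (t.2.2, t.1, t.2.1))) then 1
  else if plusTriples.any (fun t => decide ((i,j,k) = (t.1, t.2.2, t.2.1) ∨
      (i,j,k) = (t.2.2, t.2.1, t.1) ∨ (i,j,k) = (t.2.1, t.1, t.2.2))) then -1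
  else 0

/-- Structure constants of octonion multiplication:
`e_0 e_i = e_i e_0 = e_i` and `e_i e_j = -δ_ij e_0 + ε_ijk e_k` for `i,j ≥ 1`. -/
def structC (i j k : Fin 8) : ℝ :=
  if i = 0 then (if j = k then 1 else 0)
  else if j = 0 then (if i = k then 1 else 0)
  else (if i = j ∧ k = 0 then (-1:ℝ) else 0) + eps i j k

/-- Octonion multiplication on ℝ⁸. -/
def octMul (x y : Oct) : Oct := WithLp.toLp 2 (fun k => ∑ i, ∑ j, x i * y j * structC i j k)

/-- Octonionic conjugation. -/
def octConj (x : Oct) : Oct := WithLp.toLp 2 (fun k => if k = 0 then x 0 else -(x k))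

/-- The triple cross product `X(u,v,w) = -u(v̄w) + ⟨u,v⟩w + ⟨v,w⟩u - ⟨w,u⟩v`. -/
def X3 (u v w : Oct) : Oct :=
  -octMul u (octMul (octConj v) w) + ⟪u, v⟫ • w + ⟪v, w⟫ • u - ⟪w, u⟫ • v

/-- The double cross product `u × v = uv + ⟨u,v⟩ e_0` (on imaginary octonions). -/
def cross2 (u v : Oct) : Oct := octMul u v + ⟪u, v⟫ • octe 0


set_option linter.unnecessarySeqFocus false

lemma octMul_apply0 (x y : Oct) : octMul x y (0:Fin 8) = x 0 * y 0 - x 1 * y 1 - x 2 * y 2 - x 3 * y 3 - x 4 * y 4 - x 5 * y 5 - x 6 * y 6 - x 7 * y 7 := by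
  simp [octMul, Fin.sum_univ_eight, structC, eps, plusTriples] <;> ring
lemma octMul_apply1 (x y : Oct) : octMul x y (1:Fin 8) = x 0 * y 1 + x 1 * y 0 + x 2 * y 3 - x 3 * y 2 + x 4 * y 5 - x 5 * y 4 - x 6 * y 7 + x 7 * y 6 := by
  simp [octMul, Fin.sum_univ_eight, structC, eps, plusTriples] <;> ring
lemma octMul_apply2 (x y : Oct) : octMul x y (2:Fin 8) = x 0 * y 2 - x 1 * y 3 + x 2 * y 0 + x 3 * y 1 + x 4 * y 6 + x 5 * y 7 - x 6 * y 4 - x 7 * y 5 := by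
  simp [octMul, Fin.sum_univ_eight, structC, eps, plusTriples] <;> ring
lemma octMul_apply3 (x y : Oct) : octMul x y (3:Fin 8) = x 0 * y 3 + x 1 * y 2 - x 2 * y 1 + x 3 * y 0 + x 4 * y 7 - x 5 * y 6 + x 6 * y 5 - x 7 * y 4 := by
  simp [octMul, Fin.sum_univ_eight, structC, eps, plusTriples] <;> ring
lemma octMul_apply4 (x y : Oct) : octMul x y (4:Fin 8) = x 0 * y 4 - x 1 * y 5 - x 2 * y 6 - x 3 * y 7 + x 4 * y 0 + x 5 * y 1 + x 6 * y 2 + x 7 * y 3 := by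
  simp [octMul, Fin.sum_univ_eight, structC, eps, plusTriples] <;> ring
lemma octMul_apply5 (x y : Oct) : octMul x y (5:Fin 8) = x 0 * y 5 + x 1 * y 4 - x 2 * y 7 + x 3 * y 6 - x 4 * y 1 + x 5 * y 0 - x 6 * y 3 + x 7 * y 2 := by
  simp [octMul, Fin.sum_univ_eight, structC, eps, plusTriples] <;> ring
lemma octMul_apply6 (x y : Oct) : octMul x y (6:Fin 8) = x 0 * y 6 + x 1 * y 7 + x 2 * y 4 - x 3 * y 5 - x 4 * y 2 + x 5 * y 3 + x 6 * y 0 - x 7 * y 1 := by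
  simp [octMul, Fin.sum_univ_eight, structC, eps, plusTriples] <;> ring
lemma octMul_apply7 (x y : Oct) : octMul x y (7:Fin 8) = x 0 * y 7 - x 1 * y 6 + x 2 * y 5 + x 3 * y 4 - x 4 * y 3 - x 5 * y 2 + x 6 * y 1 + x 7 * y 0 := by
  simp [octMul, Fin.sum_univ_eight, structC, eps, plusTriples] <;> ring

lemma octConj_zero (x : Oct) : octConj x (0:Fin 8) = x 0 := rfl
lemma octConj_1 (x : Oct) : octConj x (1:Fin 8) = -x 1 := rfl
lemma octConj_2 (x : Oct) : octConj x (2:Fin 8) = -x 2 := rfl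
lemma octConj_3 (x : Oct) : octConj x (3:Fin 8) = -x 3 := rfl
lemma octConj_4 (x : Oct) : octConj x (4:Fin 8) = -x 4 := rfl
lemma octConj_5 (x : Oct) : octConj x (5:Fin 8) = -x 5 := rfl
lemma octConj_6 (x : Oct) : octConj x (6:Fin 8) = -x 6 := rfl
lemma octConj_7 (x : Oct) : octConj x (7:Fin 8) = -x 7 := rfl

lemma oinner (x y : Oct) : ⟪x, y⟫ = x 0 * y 0 + x 1 * y 1 + x 2 * y 2 + x 3 * y 3 +
    x 4 * y 4 + x 5 * y 5 + x 6 * y 6 + x 7 * y 7 := by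
  simp [PiLp.inner_apply, RCLike.inner_apply, Fin.sum_univ_eight]
  ring

lemma cinner (x : Oct) : ⟪octConj x, octConj x⟫ = ⟪x, x⟫ := by
  rw [oinner, oinner]
  simp only [octConj_zero, octConj_1, octConj_2, octConj_3, octConj_4, octConj_5, octConj_6, octConj_7]
  ring

set_option maxHeartbeats 1000000 in
lemma I1 (x a b : Oct) : ⟪octMul x a, octMul x b⟫ = ⟪x,x⟫ * ⟪a,b⟫ := by
  simp only [oinner, octMul_apply0, octMul_apply1, octMul_apply2, octMul_apply3, octMul_apply4, octMul_apply5, octMul_apply6, octMul_apply7]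
  ring

set_option maxHeartbeats 2000000 in
lemma skewX (u v w z : Oct) : ⟪X3 u v w, z⟫ = -⟪w, X3 u v z⟫ := by
  simp only [X3, oinner, PiLp.add_apply, PiLp.sub_apply, PiLp.neg_apply, PiLp.smul_apply,
    PiLp.zero_apply, smul_eq_mul, octMul_apply0, octMul_apply1, octMul_apply2, octMul_apply3, octMul_apply4, octMul_apply5, octMul_apply6, octMul_apply7, octConj_zero, octConj_1, octConj_2, octConj_3, octConj_4, octConj_5, octConj_6, octConj_7]
  ring

set_option maxHeartbeats 1000000 in
lemma X3uu (u v : Oct) : X3 u v u = 0 := by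
  have h0 : X3 u v u (0:Fin 8) = (0:Oct) (0:Fin 8) := by
    simp only [X3, oinner, PiLp.add_apply, PiLp.sub_apply, PiLp.neg_apply, PiLp.smul_apply,
    PiLp.zero_apply, smul_eq_mul, octMul_apply0, octMul_apply1, octMul_apply2, octMul_apply3, octMul_apply4, octMul_apply5, octMul_apply6, octMul_apply7, octConj_zero, octConj_1, octConj_2, octConj_3, octConj_4, octConj_5, octConj_6, octConj_7]
    ring
  have h1 : X3 u v u (1:Fin 8) = (0:Oct) (1:Fin 8) := by
    simp only [X3, oinner, PiLp.add_apply, PiLp.sub_apply, PiLp.neg_apply, PiLp.smul_apply,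
    PiLp.zero_apply, smul_eq_mul, octMul_apply0, octMul_apply1, octMul_apply2, octMul_apply3, octMul_apply4, octMul_apply5, octMul_apply6, octMul_apply7, octConj_zero, octConj_1, octConj_2, octConj_3, octConj_4, octConj_5, octConj_6, octConj_7]
    ring
  have h2 : X3 u v u (2:Fin 8) = (0:Oct) (2:Fin 8) := by
    simp only [X3, oinner, PiLp.add_apply, PiLp.sub_apply, PiLp.neg_apply, PiLp.smul_apply,
    PiLp.zero_apply, smul_eq_mul, octMul_apply0, octMul_apply1, octMul_apply2, octMul_apply3, octMul_apply4, octMul_apply5, octMul_apply6, octMul_apply7, octConj_zero, octConj_1, octConj_2, octConj_3, octConj_4, octConj_5, octConj_6, octConj_7]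
    ring
  have h3 : X3 u v u (3:Fin 8) = (0:Oct) (3:Fin 8) := by
    simp only [X3, oinner, PiLp.add_apply, PiLp.sub_apply, PiLp.neg_apply, PiLp.smul_apply,
    PiLp.zero_apply, smul_eq_mul, octMul_apply0, octMul_apply1, octMul_apply2, octMul_apply3, octMul_apply4, octMul_apply5, octMul_apply6, octMul_apply7, octConj_zero, octConj_1, octConj_2, octConj_3, octConj_4, octConj_5, octConj_6, octConj_7]
    ring
  have h4 : X3 u v u (4:Fin 8) = (0:Oct) (4:Fin 8) := by
    simp only [X3, oinner, PiLp.add_apply, PiLp.sub_apply, PiLp.neg_apply, PiLp.smul_apply,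
    PiLp.zero_apply, smul_eq_mul, octMul_apply0, octMul_apply1, octMul_apply2, octMul_apply3, octMul_apply4, octMul_apply5, octMul_apply6, octMul_apply7, octConj_zero, octConj_1, octConj_2, octConj_3, octConj_4, octConj_5, octConj_6, octConj_7]
    ring
  have h5 : X3 u v u (5:Fin 8) = (0:Oct) (5:Fin 8) := by
    simp only [X3, oinner, PiLp.add_apply, PiLp.sub_apply, PiLp.neg_apply, PiLp.smul_apply,
    PiLp.zero_apply, smul_eq_mul, octMul_apply0, octMul_apply1, octMul_apply2, octMul_apply3, octMul_apply4, octMul_apply5, octMul_apply6, octMul_apply7, octConj_zero, octConj_1, octConj_2, octConj_3, octConj_4, octConj_5, octConj_6, octConj_7]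
    ring
  have h6 : X3 u v u (6:Fin 8) = (0:Oct) (6:Fin 8) := by
    simp only [X3, oinner, PiLp.add_apply, PiLp.sub_apply, PiLp.neg_apply, PiLp.smul_apply,
    PiLp.zero_apply, smul_eq_mul, octMul_apply0, octMul_apply1, octMul_apply2, octMul_apply3, octMul_apply4, octMul_apply5, octMul_apply6, octMul_apply7, octConj_zero, octConj_1, octConj_2, octConj_3, octConj_4, octConj_5, octConj_6, octConj_7]
    ring
  have h7 : X3 u v u (7:Fin 8) = (0:Oct) (7:Fin 8) := by
    simp only [X3, oinner, PiLp.add_apply, PiLp.sub_apply, PiLp.neg_apply, PiLp.smul_apply,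
    PiLp.zero_apply, smul_eq_mul, octMul_apply0, octMul_apply1, octMul_apply2, octMul_apply3, octMul_apply4, octMul_apply5, octMul_apply6, octMul_apply7, octConj_zero, octConj_1, octConj_2, octConj_3, octConj_4, octConj_5, octConj_6, octConj_7]
    ring
  ext k
  fin_cases k
  exacts [h0, h1, h2, h3, h4, h5, h6, h7]

set_option maxHeartbeats 1000000 in
lemma X3vv (u v : Oct) : X3 u v v = 0 := by
  have h0 : X3 u v v (0:Fin 8) = (0:Oct) (0:Fin 8) := by
    simp only [X3, oinner, PiLp.add_apply, PiLp.sub_apply, PiLp.neg_apply, PiLp.smul_apply,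
    PiLp.zero_apply, smul_eq_mul, octMul_apply0, octMul_apply1, octMul_apply2, octMul_apply3, octMul_apply4, octMul_apply5, octMul_apply6, octMul_apply7, octConj_zero, octConj_1, octConj_2, octConj_3, octConj_4, octConj_5, octConj_6, octConj_7]
    ring
  have h1 : X3 u v v (1:Fin 8) = (0:Oct) (1:Fin 8) := by
    simp only [X3, oinner, PiLp.add_apply, PiLp.sub_apply, PiLp.neg_apply, PiLp.smul_apply,
    PiLp.zero_apply, smul_eq_mul, octMul_apply0, octMul_apply1, octMul_apply2, octMul_apply3, octMul_apply4, octMul_apply5, octMul_apply6, octMul_apply7, octConj_zero, octConj_1, octConj_2, octConj_3, octConj_4, octConj_5, octConj_6, octConj_7]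
    ring
  have h2 : X3 u v v (2:Fin 8) = (0:Oct) (2:Fin 8) := by
    simp only [X3, oinner, PiLp.add_apply, PiLp.sub_apply, PiLp.neg_apply, PiLp.smul_apply,
    PiLp.zero_apply, smul_eq_mul, octMul_apply0, octMul_apply1, octMul_apply2, octMul_apply3, octMul_apply4, octMul_apply5, octMul_apply6, octMul_apply7, octConj_zero, octConj_1, octConj_2, octConj_3, octConj_4, octConj_5, octConj_6, octConj_7]
    ring
  have h3 : X3 u v v (3:Fin 8) = (0:Oct) (3:Fin 8) := by
    simp only [X3, oinner, PiLp.add_apply, PiLp.sub_apply, PiLp.neg_apply, PiLp.smul_apply,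
    PiLp.zero_apply, smul_eq_mul, octMul_apply0, octMul_apply1, octMul_apply2, octMul_apply3, octMul_apply4, octMul_apply5, octMul_apply6, octMul_apply7, octConj_zero, octConj_1, octConj_2, octConj_3, octConj_4, octConj_5, octConj_6, octConj_7]
    ring
  have h4 : X3 u v v (4:Fin 8) = (0:Oct) (4:Fin 8) := by
    simp only [X3, oinner, PiLp.add_apply, PiLp.sub_apply, PiLp.neg_apply, PiLp.smul_apply,
    PiLp.zero_apply, smul_eq_mul, octMul_apply0, octMul_apply1, octMul_apply2, octMul_apply3, octMul_apply4, octMul_apply5, octMul_apply6, octMul_apply7, octConj_zero, octConj_1, octConj_2, octConj_3, octConj_4, octConj_5, octConj_6, octConj_7]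
    ring
  have h5 : X3 u v v (5:Fin 8) = (0:Oct) (5:Fin 8) := by
    simp only [X3, oinner, PiLp.add_apply, PiLp.sub_apply, PiLp.neg_apply, PiLp.smul_apply,
    PiLp.zero_apply, smul_eq_mul, octMul_apply0, octMul_apply1, octMul_apply2, octMul_apply3, octMul_apply4, octMul_apply5, octMul_apply6, octMul_apply7, octConj_zero, octConj_1, octConj_2, octConj_3, octConj_4, octConj_5, octConj_6, octConj_7]
    ring
  have h6 : X3 u v v (6:Fin 8) = (0:Oct) (6:Fin 8) := by
    simp only [X3, oinner, PiLp.add_apply, PiLp.sub_apply, PiLp.neg_apply, PiLp.smul_apply,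
    PiLp.zero_apply, smul_eq_mul, octMul_apply0, octMul_apply1, octMul_apply2, octMul_apply3, octMul_apply4, octMul_apply5, octMul_apply6, octMul_apply7, octConj_zero, octConj_1, octConj_2, octConj_3, octConj_4, octConj_5, octConj_6, octConj_7]
    ring
  have h7 : X3 u v v (7:Fin 8) = (0:Oct) (7:Fin 8) := by
    simp only [X3, oinner, PiLp.add_apply, PiLp.sub_apply, PiLp.neg_apply, PiLp.smul_apply,
    PiLp.zero_apply, smul_eq_mul, octMul_apply0, octMul_apply1, octMul_apply2, octMul_apply3, octMul_apply4, octMul_apply5, octMul_apply6, octMul_apply7, octConj_zero, octConj_1, octConj_2, octConj_3, octConj_4, octConj_5, octConj_6, octConj_7]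
    ring
  ext k
  fin_cases k
  exacts [h0, h1, h2, h3, h4, h5, h6, h7]


lemma X3_inner_left (u v w z : Oct) :
    ⟪X3 u v w, z⟫ = -⟪octMul u (octMul (octConj v) w), z⟫ + ⟪u,v⟫*⟪w,z⟫ +
      ⟪v,w⟫*⟪u,z⟫ - ⟪w,u⟫*⟪v,z⟫ := by
  simp only [X3, inner_add_left, inner_sub_left, inner_neg_left, real_inner_smul_left]
  try ring

lemma X3_inner_u (u v p : Oct) : ⟪X3 u v p, u⟫ = 0 := by
  rw [skewX, X3uu, inner_zero_right, neg_zero]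

lemma X3_inner_v (u v p : Oct) : ⟪X3 u v p, v⟫ = 0 := by
  rw [skewX, X3vv, inner_zero_right, neg_zero]

lemma X3_inner_self (u v p : Oct) : ⟪X3 u v p, p⟫ = 0 := by
  linear_combination (skewX u v p p + real_inner_comm p (X3 u v p))/2

lemma normX (u v : Oct) (hnu : ⟪u,u⟫ = 1) (hnv : ⟪v,v⟫ = 1) (huv : ⟪u,v⟫ = 0) (p : Oct) :
    ⟪X3 u v p, X3 u v p⟫ = ⟪p,p⟫ - ⟪p,u⟫^2 - ⟪v,p⟫^2 := by
  have hvu : ⟪v,u⟫ = (0:ℝ) := by rw [← huv]; exact real_inner_comm u v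
  set A := octMul u (octMul (octConj v) p) with hA
  have hAA : ⟪A,A⟫ = ⟪p,p⟫ := by
    rw [hA, I1, I1, cinner, hnu, hnv]; ring
  have hAu : ⟪A,u⟫ = ⟪v,p⟫ := by
    have h := X3_inner_left u v p u
    rw [← hA] at h
    linear_combination h - X3_inner_u u v p + ⟪p,u⟫*huv + ⟪v,p⟫*hnu - ⟪p,u⟫*hvu
  have hAv : ⟪A,v⟫ = -⟪p,u⟫ := by
    have h := X3_inner_left u v p v
    rw [← hA] at h
    linear_combination h - X3_inner_v u v p + (⟪p,v⟫+⟪v,p⟫)*huv - ⟪p,u⟫*hnv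
  have hAp : ⟪A,p⟫ = (0:ℝ) := by
    have h := X3_inner_left u v p p
    rw [← hA] at h
    linear_combination h - X3_inner_self u v p + ⟪p,p⟫*huv + ⟪v,p⟫*(real_inner_comm p u)
  have e1 : ⟪X3 u v p, X3 u v p⟫ = -⟪A, X3 u v p⟫ := by
    have h := X3_inner_left u v p (X3 u v p)
    rw [← hA] at h
    linear_combination h + ⟪u,v⟫*(real_inner_comm (X3 u v p) p) +
      ⟪u,v⟫*(X3_inner_self u v p) + ⟪v,p⟫*(real_inner_comm (X3 u v p) u) +
      ⟪v,p⟫*(X3_inner_u u v p) - ⟪p,u⟫*(real_inner_comm (X3 u v p) v) -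
      ⟪p,u⟫*(X3_inner_v u v p)
  have e2 : ⟪X3 u v p, A⟫ = -⟪p,p⟫ + ⟪v,p⟫^2 + ⟪p,u⟫^2 := by
    have h := X3_inner_left u v p A
    rw [← hA] at h
    linear_combination h - hAA + ⟪u,v⟫*(real_inner_comm A p) + ⟪u,v⟫*hAp +
      ⟪v,p⟫*(real_inner_comm A u) + ⟪v,p⟫*hAu - ⟪p,u⟫*(real_inner_comm A v) - ⟪p,u⟫*hAv
  linear_combination e1 + real_inner_comm A (X3 u v p) - e2

/-- For orthonormal `{u,v}` in ℝ⁸, the map `J_{u∧v}(w) = X(u,v,w)` is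
skew-symmetric, vanishes on `span{u,v}`, preserves `(u∧v)^⊥`, squares to
`-id` there, and satisfies `tr(Jᵗ J) = 6`. -/
theorem stmt8 (u v : Oct) (hu : ‖u‖ = 1) (hv : ‖v‖ = 1) (huv : ⟪u, v⟫ = 0) :
    (∀ w z : Oct, ⟪X3 u v w, z⟫ = -⟪w, X3 u v z⟫) ∧
    X3 u v u = 0 ∧ X3 u v v = 0 ∧
    (∀ w : Oct, ⟪w, u⟫ = 0 → ⟪w, v⟫ = 0 →
      ⟪X3 u v w, u⟫ = 0 ∧ ⟪X3 u v w, v⟫ = 0 ∧ X3 u v (X3 u v w) = -w) ∧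
    (∑ k : Fin 8, ⟪X3 u v (octe k), X3 u v (octe k)⟫) = 6 := by
  have hnu : ⟪u,u⟫ = (1:ℝ) := by
    rw [real_inner_self_eq_norm_mul_norm, hu]; norm_num
  have hnv : ⟪v,v⟫ = (1:ℝ) := by
    rw [real_inner_self_eq_norm_mul_norm, hv]; norm_num
  refine ⟨skewX u v, X3uu u v, X3vv u v, ?_, ?_⟩
  · intro w hwu hwv
    refine ⟨X3_inner_u u v w, X3_inner_v u v w, ?_⟩
    set W := X3 u v w with hW
    have hWu : ⟪W,u⟫ = (0:ℝ) := X3_inner_u u v w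
    have hWv : ⟪W,v⟫ = (0:ℝ) := X3_inner_v u v w
    have hWW : ⟪W,W⟫ = ⟪w,w⟫ := by
      rw [hW, normX u v hnu hnv huv w]
      linear_combination -⟪w,u⟫*hwu - ⟪v,w⟫*(real_inner_comm w v) - ⟪v,w⟫*hwv
    have hXWW : ⟪X3 u v W, X3 u v W⟫ = ⟪w,w⟫ := by
      rw [normX u v hnu hnv huv W]
      linear_combination hWW - ⟪W,u⟫*hWu - ⟪v,W⟫*(real_inner_comm W v) - ⟪v,W⟫*hWv
    have hXWw : ⟪X3 u v W, w⟫ = -⟪w,w⟫ := by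
      have h := skewX u v W w
      rw [← hW] at h
      rw [h, hWW]
    have hy : ⟪X3 u v W + w, X3 u v W + w⟫ = (0:ℝ) := by
      rw [real_inner_add_add_self, hXWW, hXWw]; ring
    have hy0 : X3 u v W + w = 0 := inner_self_eq_zero.mp hy
    exact eq_neg_of_add_eq_zero_left hy0
  · have hN : ∀ k : Fin 8, ⟪X3 u v (octe k), X3 u v (octe k)⟫ = 1 - (u k)^2 - (v k)^2 := by
      intro k
      rw [normX u v hnu hnv huv (octe k)]
      have h1 : ⟪octe k, octe k⟫ = (1:ℝ) := by
        simp [octe, EuclideanSpace.inner_single_left, EuclideanSpace.single_apply]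
      have h2 : ⟪octe k, u⟫ = u k := by
        simp [octe, EuclideanSpace.inner_single_left]
      have h3 : ⟪v, octe k⟫ = v k := by
        simp [octe, EuclideanSpace.inner_single_right]
      rw [h1, h2, h3]
    simp only [hN]
    have hnu' := hnu; rw [oinner] at hnu'
    have hnv' := hnv; rw [oinner] at hnv'
    rw [Fin.sum_univ_eight]
    linear_combination -hnu' - hnv'
end
end

section
/- For the section 𝔍 of skew-symmetric normal operators on G(2,8) induced by the triple cross product: at the base point e_0∧e_1, the second covariant derivative along the coordinate geodesic direction satisfies ∇_{e_j^ℓ}∇_{E_j^ℓ}𝔍 = -J_{e_0∧e_1} + (e_j⊗e^j)J_{e_0∧e_1} + J_{e_0∧e_1}(e_j⊗e^j) for ℓ ∈ {0,1}, j ∈ {2,...,7}, and consequently Δ𝔍(e_0∧e_1) = -8 J_{e_0∧e_1}. -/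
open scoped RealInnerProductSpace

noncomputable section

open Matrix

/-- The matrix of the skew-symmetric operator `J_{u∧v}(w) = X(u,v,w)`. -/
def Jmat (u v : Oct) : Matrix (Fin 8) (Fin 8) ℝ :=
  Matrix.of fun a b => (X3 u v (octe b)) a

def m0 (l : Fin 2) : Fin 8 := Fin.castLE (by norm_num) l

/-- The positively oriented orthonormal basis of the geodesic plane
`γ_j^ℓ(r)` of `G(2,8)` (index `ℓ+1` mod 2). -/
def bvec (l : Fin 2) (j : Fin 8) (r : ℝ) (m : Fin 2) : Oct :=
  if m = l then Real.cos r • octe (m0 l) + Real.sin r • octe j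
  else octe (m0 m)

/-- The section `𝔍` along the surface `P_{t,s} = γ_j^ℓ(t+s)`. -/
def Jsurf (l : Fin 2) (j : Fin 8) (t s : ℝ) : Matrix (Fin 8) (Fin 8) ℝ :=
  Jmat (bvec l j (t + s) 0) (bvec l j (t + s) 1)

def J1 (l : Fin 2) (j : Fin 8) : Matrix (Fin 8) (Fin 8) ℝ :=
  Matrix.of fun a b => deriv (fun s => Jsurf l j 0 s a b) 0

def J2 (l : Fin 2) (j : Fin 8) : Matrix (Fin 8) (Fin 8) ℝ :=
  Matrix.of fun a b => deriv (fun t => deriv (fun s => Jsurf l j t s a b) 0) 0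

/-- The orthogonal projection onto `(span{e₀,e₁})^⊥` as a matrix. -/
def pi0m : Matrix (Fin 8) (Fin 8) ℝ :=
  1 - Matrix.single 0 0 1 - Matrix.single 1 1 1

/-- `π₀' = -(e_j⊗e^ℓ + e_ℓ⊗e^j)`, the derivative at `t = 0` of the family
of normal projections along `γ_j^ℓ`. -/
def pi0'm (l : Fin 2) (j : Fin 8) : Matrix (Fin 8) (Fin 8) ℝ :=
  -(Matrix.single j (m0 l) 1 + Matrix.single (m0 l) j 1)

/-- The second covariant derivative `∇_{e_j^ℓ}∇_{E_j^ℓ}𝔍` at `e₀∧e₁`,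
computed as `π₀ (π₀' J₁ + J₂ + J₁ π₀') π₀`. -/
def covD2J (l : Fin 2) (j : Fin 8) : Matrix (Fin 8) (Fin 8) ℝ :=
  pi0m * (pi0'm l j * J1 l j + J2 l j + J1 l j * pi0'm l j) * pi0m

/-! integer mirrors -/

def epsZ (i j k : Fin 8) : ℤ :=
  if plusTriples.any (fun t => decide ((i,j,k) = t ∨ (i,j,k) = (t.2.1, t.2.2, t.1) ∨
      (i,j,k) = (t.2.2, t.1, t.2.1))) then 1
  else if plusTriples.any (fun t => decide ((i,j,k) = (t.1, t.2.2, t.2.1) ∨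
      (i,j,k) = (t.2.2, t.2.1, t.1) ∨ (i,j,k) = (t.2.1, t.1, t.2.2))) then -1
  else 0

def structZ (i j k : Fin 8) : ℤ :=
  if i = 0 then (if j = k then 1 else 0)
  else if j = 0 then (if i = k then 1 else 0)
  else (if i = j ∧ k = 0 then (-1:ℤ) else 0) + epsZ i j k

lemma structC_eq (i j k : Fin 8) : structC i j k = (structZ i j k : ℝ) := by
  unfold structC structZ eps epsZ
  split_ifs <;> push_cast <;> ring

def Jint (p q : Fin 8) : Matrix (Fin 8) (Fin 8) ℤ :=
  Matrix.of fun a b =>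
    -((if q = 0 then 1 else -1) * ∑ m, structZ q b m * structZ p m a)
    + (if q = p then 1 else 0) * (if a = b then 1 else 0)
    + (if b = q then 1 else 0) * (if a = p then 1 else 0)
    - (if p = b then 1 else 0) * (if a = q then 1 else 0)

lemma octe_apply (i k : Fin 8) : octe i k = if k = i then 1 else 0 := by
  simp [octe, EuclideanSpace.single_apply]

lemma octMul_octe_right (p : Fin 8) (y : Oct) (k : Fin 8) :
    octMul y (octe p) k = ∑ i, y i * structC i p k := by
  unfold octMul; rw [PiLp.toLp_apply]
  congr 1; funext i
  rw [Finset.sum_eq_single p]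
  · simp [octe_apply]
  · intro b _ hb; simp [octe_apply, hb]
  · simp

lemma octMul_octe_left (p : Fin 8) (y : Oct) (k : Fin 8) :
    octMul (octe p) y k = ∑ j, y j * structC p j k := by
  unfold octMul; rw [PiLp.toLp_apply]
  rw [Finset.sum_eq_single p]
  · congr 1; funext j; simp [octe_apply]
  · intro b _ hb
    apply Finset.sum_eq_zero; intro j _; simp [octe_apply, hb]
  · simp

lemma octConj_octe (q : Fin 8) :
    octConj (octe q) = ((if q = 0 then 1 else -1 : ℝ)) • octe q := by
  ext k
  simp only [octConj, octe_apply, PiLp.smul_apply, smul_eq_mul, PiLp.toLp_apply]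
  by_cases hk : k = 0 <;> by_cases hq : q = 0 <;>
    simp only [hk, hq, if_true, if_false, if_pos, if_neg, not_false_iff, eq_comm] <;>
    first | (split_ifs <;> simp_all) | norm_num

lemma inner_octe (p q : Fin 8) : ⟪octe p, octe q⟫ = if q = p then (1:ℝ) else 0 := by
  rw [octe, octe, EuclideanSpace.inner_single_left, EuclideanSpace.single_apply]
  simp [eq_comm]

lemma octe_mul_octe (q b k : Fin 8) : octMul (octe q) (octe b) k = structC q b k := by
  rw [octMul_octe_left, Finset.sum_eq_single b]
  · simp [octe_apply]
  · intro m _ hm; simp [octe_apply, hm]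
  · simp

lemma octMul_smul_right (c : ℝ) (x y : Oct) :
    octMul x (c • y) = WithLp.toLp 2 (fun k => c * octMul x y k) := by
  ext k
  simp only [octMul, PiLp.smul_apply, smul_eq_mul, PiLp.toLp_apply]
  rw [Finset.mul_sum]; congr 1; funext i
  rw [Finset.mul_sum]; congr 1; funext j
  ring

lemma octMul_smul_left (c : ℝ) (x y : Oct) :
    octMul (c • x) y = WithLp.toLp 2 (fun k => c * octMul x y k) := by
  ext k
  simp only [octMul, PiLp.smul_apply, smul_eq_mul, PiLp.toLp_apply]
  rw [Finset.mul_sum]; congr 1; funext i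
  rw [Finset.mul_sum]; congr 1; funext j
  ring

lemma Jmat_octe (p q : Fin 8) :
    Jmat (octe p) (octe q) = (Jint p q).map (Int.cast : ℤ → ℝ) := by
  ext a b
  simp only [Jmat, Jint, Matrix.of_apply, Matrix.map_apply, X3]
  have h2 : octMul (octe p) (octMul (octConj (octe q)) (octe b)) a
      = (if q = 0 then 1 else -1 : ℝ) * ∑ m, structC q b m * structC p m a := by
    rw [octConj_octe, octMul_smul_left, octMul_octe_left, Finset.mul_sum]
    refine Finset.sum_congr rfl fun m _ => ?_
    rw [PiLp.toLp_apply, octe_mul_octe]; ring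
  simp only [PiLp.add_apply, PiLp.sub_apply, PiLp.neg_apply, PiLp.smul_apply, smul_eq_mul,
    inner_octe, octe_apply, h2]
  push_cast [apply_ite (Int.cast : ℤ → ℝ), structC_eq]
  try simp only [structC_eq]
  try push_cast
  try ring

/-! Linearity -/

lemma octMul_add_left' (x y z : Oct) : octMul (x + y) z = octMul x z + octMul y z := by
  ext k
  simp only [octMul, PiLp.toLp_apply, PiLp.add_apply, Pi.add_apply, add_mul, Finset.sum_add_distrib]

lemma octMul_add_right' (x y z : Oct) : octMul z (x + y) = octMul z x + octMul z y := by
  ext k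
  simp only [octMul, PiLp.toLp_apply, PiLp.add_apply, Pi.add_apply, mul_add, add_mul, Finset.sum_add_distrib]

lemma octMul_smul_left' (c : ℝ) (x y : Oct) : octMul (c • x) y = c • octMul x y := by
  ext k
  simp only [octMul_smul_left, PiLp.toLp_apply, PiLp.smul_apply, Pi.smul_apply, smul_eq_mul]

lemma octMul_smul_right' (c : ℝ) (x y : Oct) : octMul x (c • y) = c • octMul x y := by
  ext k
  simp only [octMul_smul_right, PiLp.toLp_apply, PiLp.smul_apply, Pi.smul_apply, smul_eq_mul]

lemma octConj_add (x y : Oct) : octConj (x + y) = octConj x + octConj y := by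
  ext k
  simp only [octConj, PiLp.toLp_apply, PiLp.add_apply, Pi.add_apply]
  split_ifs <;> ring

lemma octConj_smul (c : ℝ) (x : Oct) : octConj (c • x) = c • octConj x := by
  ext k
  simp only [octConj, PiLp.toLp_apply, PiLp.smul_apply, Pi.smul_apply, smul_eq_mul]
  split_ifs <;> ring

lemma X3_cs_left (c d : ℝ) (x y v w : Oct) :
    X3 (c • x + d • y) v w = c • X3 x v w + d • X3 y v w := by
  simp only [X3, octMul_add_left', octMul_smul_left', inner_add_left, inner_add_right,
    real_inner_smul_left, real_inner_smul_right]
  module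

lemma X3_cs_right (c d : ℝ) (u x y w : Oct) :
    X3 u (c • x + d • y) w = c • X3 u x w + d • X3 u y w := by
  simp only [X3, octConj_add, octConj_smul, octMul_add_left', octMul_smul_left',
    octMul_add_right', octMul_smul_right', inner_add_left, inner_add_right,
    real_inner_smul_left, real_inner_smul_right]
  module

def Kmat (l : Fin 2) (j : Fin 8) : Matrix (Fin 8) (Fin 8) ℝ :=
  if l = 0 then Jmat (octe j) (octe 1) else Jmat (octe 0) (octe j)

lemma Jsurf_eq (l : Fin 2) (j : Fin 8) (t s : ℝ) (a b : Fin 8) :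
    Jsurf l j t s a b = Real.cos (t + s) * Jmat (octe 0) (octe 1) a b
      + Real.sin (t + s) * Kmat l j a b := by
  fin_cases l <;> beta_reduce <;> simp only [Fin.zero_eta, Fin.mk_one]
  · have hb0 : bvec 0 j (t + s) 0 = Real.cos (t + s) • octe 0 + Real.sin (t + s) • octe j := by
      simp only [bvec, if_pos rfl]
      norm_num [m0]
    have hb1 : bvec 0 j (t + s) 1 = octe 1 := by
      norm_num [bvec, m0] <;> rfl
    rw [Jsurf, hb0, hb1]
    simp only [Jmat, Matrix.of_apply, X3_cs_left, Kmat, if_pos rfl, if_true,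
      PiLp.add_apply, PiLp.smul_apply, smul_eq_mul]
  · have hb0 : bvec 1 j (t + s) 0 = octe 0 := by
      norm_num [bvec, m0] <;> rfl
    have hb1 : bvec 1 j (t + s) 1 = Real.cos (t + s) • octe 1 + Real.sin (t + s) • octe j := by
      simp only [bvec, if_pos rfl]
      norm_num [m0] <;> rfl
    rw [Jsurf, hb0, hb1]
    simp only [Jmat, Matrix.of_apply, X3_cs_right, Kmat,
      PiLp.add_apply, PiLp.smul_apply, smul_eq_mul]
    norm_num [Matrix.of_apply]

lemma hasDeriv_trig (A B t s : ℝ) :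
    HasDerivAt (fun s => Real.cos (t + s) * A + Real.sin (t + s) * B)
      (-Real.sin (t + s) * A + Real.cos (t + s) * B) s := by
  have h : HasDerivAt (fun s : ℝ => t + s) 1 s := (hasDerivAt_id s).const_add t
  have hc := (Real.hasDerivAt_cos (t + s)).comp s h
  have hs := (Real.hasDerivAt_sin (t + s)).comp s h
  simpa [Function.comp, Pi.add_def] using (hc.mul_const A).add (hs.mul_const B)

lemma deriv_trig (A B t : ℝ) :
    deriv (fun s => Real.cos (t + s) * A + Real.sin (t + s) * B) 0
      = -Real.sin t * A + Real.cos t * B := by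
  have := (hasDeriv_trig A B t 0).deriv
  simpa using this

lemma J1_eq (l : Fin 2) (j : Fin 8) : J1 l j = Kmat l j := by
  ext a b
  have hf : (fun s => Jsurf l j 0 s a b)
      = fun s => Real.cos (0 + s) * Jmat (octe 0) (octe 1) a b + Real.sin (0 + s) * Kmat l j a b := by
    funext s; exact Jsurf_eq l j 0 s a b
  rw [J1, Matrix.of_apply, hf, deriv_trig]
  simp

lemma J2_eq (l : Fin 2) (j : Fin 8) : J2 l j = -Jmat (octe 0) (octe 1) := by
  ext a b
  set A := Jmat (octe 0) (octe 1) a b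
  set B := Kmat l j a b
  have hf : (fun t => deriv (fun s => Jsurf l j t s a b) 0)
      = fun t => -Real.sin t * A + Real.cos t * B := by
    funext t
    have hg : (fun s => Jsurf l j t s a b)
        = fun s => Real.cos (t + s) * A + Real.sin (t + s) * B := by
      funext s; exact Jsurf_eq l j t s a b
    rw [hg, deriv_trig]
  rw [J2, Matrix.of_apply, hf]
  have h : HasDerivAt (fun t => -Real.sin t * A + Real.cos t * B)
      (-Real.cos 0 * A + -Real.sin 0 * B) 0 := by
    have h1 := ((Real.hasDerivAt_sin 0).neg.mul_const A).add ((Real.hasDerivAt_cos 0).mul_const B)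
    simpa [Pi.add_def] using h1
  rw [h.deriv]
  simp [Matrix.neg_apply, A]

def pZ : Matrix (Fin 8) (Fin 8) ℤ :=
  1 - Matrix.single 0 0 1 - Matrix.single 1 1 1

def pdZ (l : Fin 2) (j : Fin 8) : Matrix (Fin 8) (Fin 8) ℤ :=
  -(Matrix.single j (m0 l) 1 + Matrix.single (m0 l) j 1)

def KZ (l : Fin 2) (j : Fin 8) : Matrix (Fin 8) (Fin 8) ℤ :=
  if l = 0 then Jint j 1 else Jint 0 j

def MZ (l : Fin 2) (j : Fin 8) : Matrix (Fin 8) (Fin 8) ℤ :=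
  pZ * (pdZ l j * KZ l j + -(Jint 0 1) + KZ l j * pdZ l j) * pZ

def RZ (j : Fin 8) : Matrix (Fin 8) (Fin 8) ℤ :=
  -(Jint 0 1) + Matrix.single j j 1 * Jint 0 1 + Jint 0 1 * Matrix.single j j 1

lemma cM_mul (A B : Matrix (Fin 8) (Fin 8) ℤ) :
    (A * B).map (Int.cast : ℤ → ℝ) = A.map Int.cast * B.map Int.cast := by
  ext a b
  simp only [Matrix.map_apply, Matrix.mul_apply]
  push_cast
  rfl

lemma cM_add (A B : Matrix (Fin 8) (Fin 8) ℤ) :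
    (A + B).map (Int.cast : ℤ → ℝ) = A.map Int.cast + B.map Int.cast := by
  ext a b; simp

lemma cM_neg (A : Matrix (Fin 8) (Fin 8) ℤ) :
    (-A).map (Int.cast : ℤ → ℝ) = -(A.map Int.cast) := by
  ext a b; simp

lemma hpi0 : pi0m = pZ.map (Int.cast : ℤ → ℝ) := by
  ext a b
  simp only [pi0m, pZ, Matrix.sub_apply, Matrix.one_apply, Matrix.single,
    Matrix.of_apply, Matrix.map_apply]
  push_cast [apply_ite (Int.cast : ℤ → ℝ)]
  rfl

lemma hpd (l : Fin 2) (j : Fin 8) : pi0'm l j = (pdZ l j).map (Int.cast : ℤ → ℝ) := by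
  ext a b
  simp only [pi0'm, pdZ, Matrix.neg_apply, Matrix.add_apply, Matrix.single,
    Matrix.of_apply, Matrix.map_apply]
  push_cast [apply_ite (Int.cast : ℤ → ℝ)]
  rfl

lemma hstd (j : Fin 8) : Matrix.single j j (1:ℝ)
    = (Matrix.single j j (1:ℤ)).map (Int.cast : ℤ → ℝ) := by
  ext a b
  simp only [Matrix.single, Matrix.of_apply, Matrix.map_apply]
  push_cast [apply_ite (Int.cast : ℤ → ℝ)]
  rfl

lemma hK (l : Fin 2) (j : Fin 8) : Kmat l j = (KZ l j).map (Int.cast : ℤ → ℝ) := by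
  rw [Kmat, KZ]
  split_ifs <;> rw [Jmat_octe]

lemma covD2J_eq (l : Fin 2) (j : Fin 8) : covD2J l j = (MZ l j).map (Int.cast : ℤ → ℝ) := by
  rw [covD2J, J1_eq, J2_eq, hpi0, hpd, Jmat_octe, hK]
  simp only [MZ, cM_mul, cM_add, cM_neg]

set_option maxRecDepth 100000 in
set_option maxHeartbeats 4000000 in
/-- `∇_{e_j^ℓ}∇_{E_j^ℓ}𝔍 = -J_{e₀∧e₁} + (e_j⊗e^j)J_{e₀∧e₁}
+ J_{e₀∧e₁}(e_j⊗e^j)` and hence `Δ𝔍(e₀∧e₁) = Σ_{ℓ,j} ∇_{e_j^ℓ}∇_{E_j^ℓ}𝔍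
= -8 J_{e₀∧e₁}`. -/
theorem stmt17 :
    (∀ (l : Fin 2) (j : Fin 8), 2 ≤ (j : ℕ) →
      covD2J l j = -Jmat (octe 0) (octe 1)
        + Matrix.single j j 1 * Jmat (octe 0) (octe 1)
        + Jmat (octe 0) (octe 1) * Matrix.single j j 1) ∧
    (∑ l : Fin 2, ∑ j ∈ Finset.univ.filter (fun j : Fin 8 => 2 ≤ (j : ℕ)),
        covD2J l j) = (-8 : ℝ) • Jmat (octe 0) (octe 1) := by
  constructor
  · intro l j hj
    rw [covD2J_eq, Jmat_octe, hstd]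
    rw [← cM_mul, ← cM_mul, ← cM_neg, ← cM_add, ← cM_add]
    refine congrArg (fun M : Matrix (Fin 8) (Fin 8) ℤ => M.map (Int.cast : ℤ → ℝ)) ?_
    revert hj
    fin_cases l <;> fin_cases j <;> intro hj <;>
      first
        | exact absurd hj (by decide)
        | decide
  · have hsum : (∑ l : Fin 2, ∑ j ∈ Finset.univ.filter (fun j : Fin 8 => 2 ≤ (j : ℕ)),
          covD2J l j)
        = (∑ l : Fin 2, ∑ j ∈ Finset.univ.filter (fun j : Fin 8 => 2 ≤ (j : ℕ)),
          MZ l j).map (Int.cast : ℤ → ℝ) := by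
      ext a b
      simp only [Matrix.sum_apply, Matrix.map_apply, covD2J_eq]
      push_cast
      rfl
    have h8 : (-8:ℝ) • Jmat (octe 0) (octe 1)
        = ((-8 : ℤ) • Jint 0 1).map (Int.cast : ℤ → ℝ) := by
      rw [Jmat_octe]
      ext a b
      simp only [Matrix.map_apply, Matrix.smul_apply, smul_eq_mul]
      push_cast
      ring
    rw [hsum, h8]
    refine congrArg (fun M : Matrix (Fin 8) (Fin 8) ℤ => M.map (Int.cast : ℤ → ℝ)) ?_
    decide
end
end
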